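/- (Quantum duality theorem, total correctness) Let 𝓔 be a quantum operation with dual 𝓔*, and let M, N be quantum predicates. Then the total correctness condition tr(Mρ) ≤ tr(N·𝓔(ρ)) for all partial density operators ρ holds if and only if M ⊑ 𝓔*(N). -/

import Mathlib

open Matrix BigOperators ComplexOrder

private lemma trace_mul_vecMulVec (n : ℕ) (B : Matrix (Fin n) (Fin n) ℂ) (y : Fin n → ℂ) :
    (B * vecMulVec y (star y)).trace = dotProduct (star y) (B *ᵥ y) := by
  simp only [Matrix.trace, Matrix.diag, Matrix.mul_apply, vecMulVec_apply, dotProduct, mulVec,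
    Pi.star_apply, Finset.mul_sum, Finset.sum_mul]
  congr 1; ext i; congr 1; ext j; ring

private lemma trace_nonneg_of_psd (n : ℕ) {A : Matrix (Fin n) (Fin n) ℂ}
    (hA : A.PosSemidef) : 0 ≤ A.trace := by
  rw [Matrix.trace]
  refine Finset.sum_nonneg fun i _ => ?_
  simpa [dotProduct, Pi.single_apply] using hA.dotProduct_mulVec_nonneg (Pi.single i 1)

private lemma vecMulVec_psd (n : ℕ) (x : Fin n → ℂ) : (vecMulVec x (star x)).PosSemidef := by
  rw [vecMulVec_eq (Fin 1)]
  have := posSemidef_self_mul_conjTranspose (Matrix.replicateCol (Fin 1) x)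
  simp only [conjTranspose_replicateCol] at this
  convert this using 1
  ext i j; simp [Matrix.mul_apply]

private lemma trace_mul_psd_nonneg (n : ℕ) {A B : Matrix (Fin n) (Fin n) ℂ}
    (hA : A.PosSemidef) (hB : B.PosSemidef) : 0 ≤ (A * B).trace := by
  obtain ⟨C, rfl⟩ : ∃ C : Matrix (Fin n) (Fin n) ℂ, A = Cᴴ * C := by
    open scoped MatrixOrder in
    obtain ⟨C, hC⟩ := CStarAlgebra.nonneg_iff_eq_star_mul_self.mp hA.nonneg
    exact ⟨C, hC⟩
  rw [mul_assoc, trace_mul_comm]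
  exact trace_nonneg_of_psd n (hB.mul_mul_conjTranspose_same C)

private lemma psd_of_trace_re (n : ℕ) (B : Matrix (Fin n) (Fin n) ℂ) (hB : B.IsHermitian)
    (h : ∀ ρ : Matrix (Fin n) (Fin n) ℂ, ρ.PosSemidef → (ρ.trace).re ≤ 1 →
        0 ≤ ((B * ρ).trace).re) : B.PosSemidef := by
  refine posSemidef_iff_dotProduct_mulVec.mpr ⟨hB, fun x => ?_⟩
  set z := dotProduct (star x) (B *ᵥ x) with hz
  have hstar : star z = z := by
    rw [hz, ← star_dotProduct, star_mulVec, hB.eq, ← dotProduct_mulVec]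
  have him : z.im = 0 := by
    have := congrArg Complex.im hstar
    simp only [Complex.star_def, Complex.conj_im] at this
    linarith
  have hre : 0 ≤ z.re := by
    by_cases hx : x = 0
    · simp [hz, hx]
    · set r : ℝ := ∑ i, Complex.normSq (x i) with hr
      have hrpos : 0 < r := by
        have : ∃ i, x i ≠ 0 := by
          by_contra hc; push_neg at hc; exact hx (funext hc)
        obtain ⟨i, hi⟩ := this
        exact Finset.sum_pos' (fun j _ => Complex.normSq_nonneg _)
          ⟨i, Finset.mem_univ i, Complex.normSq_pos.mpr hi⟩
      set c : ℝ := (Real.sqrt r)⁻¹ with hc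
      have hcpos : 0 < c := inv_pos.mpr (Real.sqrt_pos.mpr hrpos)
      set y : Fin n → ℂ := (c : ℂ) • x with hy
      have quad : dotProduct (star y) (B *ᵥ y) = ((c : ℂ) * (c : ℂ)) * z := by
        simp only [hy, star_smul, mulVec_smul, smul_dotProduct, dotProduct_smul, smul_eq_mul,
          Complex.star_def, Complex.conj_ofReal, hz]
        ring
      have htr : ((vecMulVec y (star y)).trace).re = c ^ 2 * r := by
        have h1 : (vecMulVec y (star y)).trace = dotProduct (star y) y := by
          simpa using trace_mul_vecMulVec n 1 y
        rw [h1]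
        have : dotProduct (star y) y = ((∑ i, Complex.normSq (y i) : ℝ) : ℂ) := by
          simp [dotProduct, Complex.normSq_eq_conj_mul_self]
        rw [this, Complex.ofReal_re]
        simp only [hy, Pi.smul_apply, smul_eq_mul, Complex.normSq_mul, Complex.normSq_ofReal,
          ← Finset.mul_sum, ← hr]
        ring
      have htr1 : ((vecMulVec y (star y)).trace).re ≤ 1 := by
        rw [htr, hc]
        rw [inv_pow, Real.sq_sqrt hrpos.le]
        rw [inv_mul_cancel₀ hrpos.ne']
      have := h _ (vecMulVec_psd n y) htr1
      rw [trace_mul_vecMulVec, quad, mul_assoc] at this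
      rw [show ((c:ℂ) * ((c:ℂ) * z)).re = c * (c * z.re) by
        simp [Complex.mul_re, Complex.ofReal_re, Complex.ofReal_im]] at this
      nlinarith [mul_pos hcpos hcpos]
  rw [Complex.le_def]
  exact ⟨by simpa using hre, by simp [him]⟩

theorem quantum_duality_total (n : ℕ) (ι : Type*) [Fintype ι]
    (E : ι → Matrix (Fin n) (Fin n) ℂ)
    (hE : ((1 : Matrix (Fin n) (Fin n) ℂ) - ∑ k, (E k)ᴴ * E k).PosSemidef)
    (M N : Matrix (Fin n) (Fin n) ℂ)
    (hMh : M.IsHermitian) (hM0 : M.PosSemidef)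
    (hM1 : ((1 : Matrix (Fin n) (Fin n) ℂ) - M).PosSemidef)
    (hNh : N.IsHermitian) (hN0 : N.PosSemidef)
    (hN1 : ((1 : Matrix (Fin n) (Fin n) ℂ) - N).PosSemidef) :
    (∀ ρ : Matrix (Fin n) (Fin n) ℂ, ρ.PosSemidef → (ρ.trace).re ≤ 1 →
        ((M * ρ).trace).re ≤ ((N * ∑ k, E k * ρ * (E k)ᴴ).trace).re)
      ↔ ((∑ k, (E k)ᴴ * N * E k) - M).PosSemidef := by
  set A : Matrix (Fin n) (Fin n) ℂ := ∑ k, (E k)ᴴ * N * E k with hA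
  have key : ∀ ρ : Matrix (Fin n) (Fin n) ℂ,
      (N * ∑ k, E k * ρ * (E k)ᴴ).trace = (A * ρ).trace := by
    intro ρ
    rw [Finset.mul_sum, trace_sum, hA, Finset.sum_mul, trace_sum]
    refine Finset.sum_congr rfl fun k _ => ?_
    rw [← mul_assoc, Matrix.trace_mul_cycle, ← mul_assoc]
  have hAh : A.IsHermitian := by
    show Aᴴ = A
    rw [hA, conjTranspose_sum]
    exact Finset.sum_congr rfl fun k _ => isHermitian_conjTranspose_mul_mul (E k) hNh
  have hdiff : ∀ ρ : Matrix (Fin n) (Fin n) ℂ,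
      (((A - M) * ρ).trace).re = ((A * ρ).trace).re - ((M * ρ).trace).re := by
    intro ρ
    rw [sub_mul, trace_sub, Complex.sub_re]
  constructor
  · intro h
    refine psd_of_trace_re n (A - M) (hAh.sub hMh) fun ρ hρ htr => ?_
    rw [hdiff]
    have := h ρ hρ htr
    rw [key ρ] at this
    linarith
  · intro hpsd ρ hρ htr
    have h0 : 0 ≤ (((A - M) * ρ).trace) := trace_mul_psd_nonneg n hpsd hρ
    have h0re : 0 ≤ (((A - M) * ρ).trace).re := (Complex.le_def.mp h0).1
    rw [hdiff] at h0re
    rw [key ρ]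
    linarith
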